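/- Let Σ be the 2×2 real matrix with all entries equal to 1, which is positive semidefinite. Then the centered multivariate Gaussian measure on ℝ² with covariance matrix Σ equals the pushforward of the standard real Gaussian measure N(0,1) under the map z ↦ (z, z). -/

import Mathlib

open MeasureTheory ProbabilityTheory

/-- The centered multivariate Gaussian measure on `ℝ²` (`EuclideanSpace ℝ (Fin 2)`) with
positive semidefinite covariance matrix `S`, defined as the law of `√S · N` where `N` is a
standard Gaussian vector. -/
noncomputable def centeredGaussian2 {S : Matrix (Fin 2) (Fin 2) ℝ} (hS : S.PosSemidef) :
    Measure (EuclideanSpace ℝ (Fin 2)) :=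
  (Measure.pi fun _ : Fin 2 => gaussianReal 0 1).map
    fun x => (WithLp.equiv 2 (Fin 2 → ℝ)).symm ((hS.1.eigenvectorUnitary.1 * Matrix.diagonal ((RCLike.ofReal : ℝ → ℝ) ∘ (√·) ∘ hS.1.eigenvalues) *
      (star hS.1.eigenvectorUnitary : Matrix (Fin 2) (Fin 2) ℝ)).mulVec x)

namespace DrcfsAux

open Real Matrix

noncomputable abbrev cinv : ℝ := (Real.sqrt 2)⁻¹

lemma cinv_mul_cinv : cinv * cinv = 1/2 := by
  rw [← mul_inv, Real.mul_self_sqrt (by norm_num)]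
  norm_num

lemma herm_aux (a : ℝ) : (!![a, a; a, a] : Matrix (Fin 2) (Fin 2) ℝ).IsHermitian := by
  ext i j
  fin_cases i <;> fin_cases j <;>
    simp [Matrix.conjTranspose, Matrix.vecHead, Matrix.vecTail]

lemma psd_aux {a : ℝ} (ha : 0 ≤ a) :
    (!![a, a; a, a] : Matrix (Fin 2) (Fin 2) ℝ).PosSemidef := by
  refine Matrix.PosSemidef.of_dotProduct_mulVec_nonneg (herm_aux a) fun x => ?_
  have : dotProduct (star x) ((!![a, a; a, a] : Matrix (Fin 2) (Fin 2) ℝ) *ᵥ x)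
      = a * (x 0 + x 1)^2 := by
    simp [Matrix.mulVec, dotProduct, Fin.sum_univ_two, Matrix.vecHead, Matrix.vecTail]
    ring
  rw [this]
  positivity

lemma psd_ones : (!![1, 1; 1, 1] : Matrix (Fin 2) (Fin 2) ℝ).PosSemidef := psd_aux one_pos.le

lemma sqrt_ones : psd_ones.1.eigenvectorUnitary.1 * Matrix.diagonal ((RCLike.ofReal : ℝ → ℝ) ∘ (√·) ∘ psd_ones.1.eigenvalues) *
      (star psd_ones.1.eigenvectorUnitary : Matrix (Fin 2) (Fin 2) ℝ) = !![cinv, cinv; cinv, cinv] := by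
  open scoped MatrixOrder in
  refine (show _ = psd_ones.1.cfc Real.sqrt by
      simp [Matrix.IsHermitian.cfc, Unitary.conjStarAlgAut_apply]).trans ?_
  open scoped MatrixOrder in
  rw [← Matrix.IsHermitian.cfc_eq, ← cfcₙ_eq_cfc (f := Real.sqrt) (hf := Real.continuous_sqrt.continuousOn) (hf0 := Real.sqrt_zero),
    ← CFC.sqrt_eq_real_sqrt _ (Matrix.nonneg_iff_posSemidef.mpr psd_ones)]
  open scoped MatrixOrder in
  refine CFC.sqrt_unique ?_ (Matrix.nonneg_iff_posSemidef.mpr (psd_aux (by positivity)))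
  rw [← pow_two]
  have h := cinv_mul_cinv
  ext i j
  fin_cases i <;> fin_cases j <;>
    simp [pow_two, Matrix.mul_apply, Fin.sum_univ_two, Matrix.vecHead, Matrix.vecTail] <;>
    nlinarith [h]

noncomputable abbrev Ngauss : Measure ℝ := gaussianReal 0 1

lemma map_withDensity_invariant {E : Type*} [MeasurableSpace E] {μ : Measure E} {f : E → E}
    (hf : Measurable f) (hμ : μ.map f = μ) {g : E → ENNReal} (hg : Measurable g)
    (hgf : ∀ x, g (f x) = g x) :
    (μ.withDensity g).map f = μ.withDensity g := by
  ext s hs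
  rw [Measure.map_apply hf hs, withDensity_apply _ (hf hs), withDensity_apply _ hs]
  calc ∫⁻ x in f ⁻¹' s, g x ∂μ = ∫⁻ x in f ⁻¹' s, g (f x) ∂μ := by simp_rw [hgf]
    _ = ∫⁻ y in s, g y ∂(μ.map f) := (setLIntegral_map hs hg hf).symm
    _ = ∫⁻ y in s, g y ∂μ := by rw [hμ]

lemma prod_gauss_eq : (volume : Measure (ℝ × ℝ)).withDensity
      (fun p => gaussianPDF 0 1 p.1 * gaussianPDF 0 1 p.2) = Ngauss.prod Ngauss := by
  refine (Measure.prod_eq (μ := Ngauss) (ν := Ngauss) fun s t hs ht => ?_).symm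
  rw [withDensity_apply _ (hs.prod ht), Measure.volume_eq_prod, ← Measure.prod_restrict,
    lintegral_prod_mul (measurable_gaussianPDF 0 1).aemeasurable
      (measurable_gaussianPDF 0 1).aemeasurable,
    ← gaussianReal_apply 0 one_ne_zero s, ← gaussianReal_apply 0 one_ne_zero t]

noncomputable def RotL : (ℝ × ℝ) →ₗ[ℝ] (ℝ × ℝ) where
  toFun p := ((p.1 + p.2) / Real.sqrt 2, (p.2 - p.1) / Real.sqrt 2)
  map_add' p q := by simp; constructor <;> ring
  map_smul' c p := by simp [Prod.smul_def]; constructor <;> ring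

lemma rot_measurable : Measurable (⇑RotL) := RotL.continuous_of_finiteDimensional.measurable

lemma det_RotL : LinearMap.det RotL = 1 := by
  have h2 : Real.sqrt 2 * Real.sqrt 2 = 2 := Real.mul_self_sqrt (by norm_num)
  rw [← LinearMap.det_toMatrix (Module.Basis.finTwoProd ℝ)]
  rw [Matrix.det_fin_two]
  simp [LinearMap.toMatrix_apply, Module.Basis.finTwoProd, RotL]
  field_simp
  nlinarith [h2]

lemma volume_map_rot : (volume : Measure (ℝ × ℝ)).map (⇑RotL) = volume := by
  rw [Measure.map_linearMap_addHaar_eq_smul_addHaar volume (by rw [det_RotL]; norm_num),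
    det_RotL]
  simp

lemma pdf_rot (p : ℝ × ℝ) :
    gaussianPDF 0 1 (RotL p).1 * gaussianPDF 0 1 (RotL p).2
      = gaussianPDF 0 1 p.1 * gaussianPDF 0 1 p.2 := by
  have hnn : ∀ x : ℝ, 0 ≤ gaussianPDFReal 0 1 x := fun x => gaussianPDFReal_nonneg 0 1 x
  simp only [gaussianPDF, ← ENNReal.ofReal_mul (hnn _)]
  congr 1
  simp only [gaussianPDFReal, RotL, LinearMap.coe_mk, AddHom.coe_mk]
  rw [mul_mul_mul_comm, ← Real.exp_add, mul_mul_mul_comm, ← Real.exp_add]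
  congr 1
  have h2 : Real.sqrt 2 ^ 2 = 2 := Real.sq_sqrt (by norm_num)
  field_simp
  rw [h2]
  ring_nf

lemma rot_preserving : (Ngauss.prod Ngauss).map (⇑RotL) = Ngauss.prod Ngauss := by
  rw [← prod_gauss_eq]
  exact map_withDensity_invariant rot_measurable volume_map_rot
    (((measurable_gaussianPDF 0 1).comp measurable_fst).mul
      ((measurable_gaussianPDF 0 1).comp measurable_snd)) pdf_rot

lemma map_pi_sum :
    (Measure.pi fun _ : Fin 2 => gaussianReal 0 1).map
      (fun x : Fin 2 → ℝ => (x 0 + x 1) / Real.sqrt 2) = gaussianReal 0 1 := by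
  have h1 : (Measure.pi fun _ : Fin 2 => gaussianReal 0 1).map
      (MeasurableEquiv.piFinTwo fun _ => ℝ) = Ngauss.prod Ngauss :=
    (measurePreserving_piFinTwo _).map_eq
  have hcomp : (fun x : Fin 2 → ℝ => (x 0 + x 1) / Real.sqrt 2)
      = (Prod.fst ∘ ⇑RotL) ∘ (MeasurableEquiv.piFinTwo fun _ => ℝ) := by
    funext x
    simp [RotL, MeasurableEquiv.piFinTwo]
  rw [hcomp, ← Measure.map_map (measurable_fst.comp rot_measurable)
      (MeasurableEquiv.piFinTwo fun _ => ℝ).measurable, h1,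
    ← Measure.map_map measurable_fst rot_measurable, rot_preserving, Measure.map_fst_prod]
  simp

lemma measurable_diag :
    Measurable (fun z : ℝ => (WithLp.equiv 2 (Fin 2 → ℝ)).symm ![z, z]) := by
  refine (MeasurableEquiv.toLp 2 (Fin 2 → ℝ)).measurable.comp ?_
  exact measurable_pi_lambda _ fun i => by fin_cases i <;> exact measurable_id

lemma measurable_sum :
    Measurable (fun x : Fin 2 → ℝ => (x 0 + x 1) / Real.sqrt 2) :=
  ((measurable_pi_apply 0).add (measurable_pi_apply 1)).div_const _

end DrcfsAux

/-- Example 1 of the paper (necessity of Axiom (B)): the 2×2 all-ones matrix is positive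
semidefinite, and the centered multivariate Gaussian on `ℝ²` with this covariance matrix equals
the pushforward of the standard real Gaussian `N(0,1)` under `z ↦ (z, z)`. -/
theorem drcfs_stmt15 :
    ∃ hS : (!![1, 1; 1, 1] : Matrix (Fin 2) (Fin 2) ℝ).PosSemidef,
      centeredGaussian2 hS
        = (gaussianReal 0 1).map (fun z : ℝ => (WithLp.equiv 2 (Fin 2 → ℝ)).symm ![z, z]) := by
  refine ⟨DrcfsAux.psd_ones, ?_⟩
  unfold centeredGaussian2
  rw [DrcfsAux.sqrt_ones]
  have hfun : (fun x : Fin 2 → ℝ =>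
        (WithLp.equiv 2 (Fin 2 → ℝ)).symm
          ((!![DrcfsAux.cinv, DrcfsAux.cinv; DrcfsAux.cinv, DrcfsAux.cinv]
              : Matrix (Fin 2) (Fin 2) ℝ).mulVec x))
      = (fun z : ℝ => (WithLp.equiv 2 (Fin 2 → ℝ)).symm ![z, z])
        ∘ (fun x : Fin 2 → ℝ => (x 0 + x 1) / Real.sqrt 2) := by
    funext x
    simp only [Function.comp_apply]
    congr 1
    funext i
    fin_cases i <;>
      simp [Matrix.mulVec, dotProduct, Fin.sum_univ_two, Matrix.vecHead, Matrix.vecTail,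
        div_eq_mul_inv, DrcfsAux.cinv] <;> ring
  rw [hfun, ← Measure.map_map DrcfsAux.measurable_diag DrcfsAux.measurable_sum,
    DrcfsAux.map_pi_sum]
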